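/- Let R be a commutative ring containing a finitely generated ideal I such that R/I is finite and the intersection of all powers Iᵏ (k ≥ 0) equals {0}. Then every surjective polynomial map f : Rⁿ → Rⁿ given by an n-tuple of polynomials in R[x₁,...,xₙ] is injective (hence bijective). -/

import Mathlib

/-- A type mapping to a finite type with finite fibers is finite. -/
lemma aux_finite_of_fibers {A B : Type*} [Finite B] (φ : A → B)
    (h : ∀ b : B, (φ ⁻¹' {b}).Finite) : Finite A := by
  rw [← Set.finite_univ_iff]
  have : (Set.univ : Set A) ⊆ ⋃ b : B, φ ⁻¹' {b} := by
    intro a _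
    exact Set.mem_iUnion.mpr ⟨φ a, rfl⟩
  exact Set.Finite.subset (Set.finite_iUnion h) this

/-- Quotients by powers of a f.g. ideal with finite quotient are finite. -/
lemma aux_finite_quot_pow {R : Type*} [CommRing R] (I : Ideal R) (hfg : I.FG)
    (hfin : Finite (R ⧸ I)) : ∀ k : ℕ, Finite (R ⧸ I ^ k) := by
  intro k
  induction k with
  | zero =>
    have : Subsingleton (R ⧸ I ^ 0) := by
      rw [pow_zero, Ideal.one_eq_top]
      exact Ideal.Quotient.subsingleton_iff.mpr rfl
    exact Finite.of_subsingleton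
  | succ k ih =>
    -- the factor map
    have hle : I ^ (k + 1) ≤ I ^ k := Ideal.pow_le_pow_right (Nat.le_succ k)
    set φ : R ⧸ I ^ (k + 1) →+* R ⧸ I ^ k := Ideal.Quotient.factor hle with hφ
    -- generators of I ^ k
    obtain ⟨s, hs⟩ := Submodule.FG.pow hfg k
    -- finite kernel set
    have hker : ((φ : R ⧸ I ^ (k + 1) → R ⧸ I ^ k) ⁻¹' {0}).Finite := by
      classical
      set l : R ⧸ I → R := Function.surjInv Ideal.Quotient.mk_surjective with hl
      have hlm : ∀ q : R ⧸ I, Ideal.Quotient.mk I (l q) = q :=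
        fun q => Function.surjInv_eq Ideal.Quotient.mk_surjective q
      set ψ : ({x // x ∈ s} → R ⧸ I) → R ⧸ I ^ (k + 1) :=
        fun c => ∑ g ∈ s.attach, Ideal.Quotient.mk (I ^ (k + 1)) (l (c g) * g.1) with hψ
      apply Set.Finite.subset (Set.finite_range ψ)
      rintro x hx
      obtain ⟨y, rfl⟩ := Ideal.Quotient.mk_surjective x
      have hy : y ∈ I ^ k := by
        have : φ (Ideal.Quotient.mk _ y) = 0 := hx
        rwa [hφ, Ideal.Quotient.factor_mk, Ideal.Quotient.eq_zero_iff_mem] at this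
      rw [← hs] at hy
      obtain ⟨r, -, hry⟩ := Submodule.mem_span_finset.mp hy
      refine ⟨fun g => Ideal.Quotient.mk I (r g.1), ?_⟩
      show (∑ g ∈ s.attach, Ideal.Quotient.mk (I ^ (k + 1))
        (l (Ideal.Quotient.mk I (r g.1)) * g.1)) = _
      have step : ∀ g ∈ s.attach, Ideal.Quotient.mk (I ^ (k + 1))
          (l (Ideal.Quotient.mk I (r g.1)) * g.1) =
          Ideal.Quotient.mk (I ^ (k + 1)) (r g.1 * g.1) := by
        intro g _
        rw [Ideal.Quotient.mk_eq_mk_iff_sub_mem, ← sub_mul]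
        have h1 : l (Ideal.Quotient.mk I (r g.1)) - r g.1 ∈ I := by
          rw [← Ideal.Quotient.eq_zero_iff_mem, map_sub, hlm, sub_self]
        have h2 : (g.1 : R) ∈ I ^ k := by rw [← hs]; exact Submodule.subset_span g.2
        have := Ideal.mul_mem_mul h1 h2
        rwa [← pow_succ'] at this
      rw [Finset.sum_congr rfl step, ← map_sum]
      congr 1
      rw [← hry, Finset.sum_attach s (fun i => r i * i)]
      simp [smul_eq_mul]
    refine aux_finite_of_fibers φ (fun b => ?_)
    rcases Set.eq_empty_or_nonempty ((φ : R ⧸ I ^ (k + 1) → R ⧸ I ^ k) ⁻¹' {b}) with h | ⟨a₀, ha₀⟩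
    · rw [h]; exact Set.finite_empty
    · apply Set.Finite.subset (hker.image (fun x => a₀ + x))
      intro a ha
      refine ⟨a - a₀, ?_, by ring⟩
      simp only [Set.mem_preimage, Set.mem_singleton_iff, map_sub] at *
      rw [ha, ha₀, sub_self]

/-- Let `R` be a commutative ring containing a finitely generated ideal `I` such that
`R/I` is finite and `⋂ₖ Iᵏ = {0}`. Then every surjective polynomial map `f : Rⁿ → Rⁿ`
is injective (hence bijective). -/
theorem stmt_6 {R : Type*} [CommRing R] (I : Ideal R) (hfg : I.FG)
    (hfin : Finite (R ⧸ I)) (hint : (⨅ k : ℕ, I ^ k) = ⊥)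
    (n : ℕ) (f : Fin n → MvPolynomial (Fin n) R)
    (hsurj : Function.Surjective (fun a : Fin n → R => fun i => MvPolynomial.eval a (f i))) :
    Function.Injective (fun a : Fin n → R => fun i => MvPolynomial.eval a (f i)) := by
  intro a b hab
  funext i
  have key : ∀ k : ℕ, a i - b i ∈ I ^ k := by
    intro k
    set π := Ideal.Quotient.mk (I ^ k) with hπ
    set g : (Fin n → R ⧸ I ^ k) → (Fin n → R ⧸ I ^ k) :=
      fun x j => MvPolynomial.eval x ((f j).map π) with hg
    have hcomm : ∀ (c : Fin n → R), g (π ∘ c) = fun j => π (MvPolynomial.eval c (f j)) := by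
      intro c
      funext j
      rw [hg]
      simp only
      rw [← MvPolynomial.eval₂_eq_eval_map]
      have := MvPolynomial.eval₂_comp_left π (RingHom.id R) c (f j)
      simp only [MvPolynomial.eval₂_id, RingHomCompTriple.comp_eq] at this
      rw [← this]
    have hfinS : Finite (R ⧸ I ^ k) := aux_finite_quot_pow I hfg hfin k
    have hgsurj : Function.Surjective g := by
      intro y
      have hy : ∀ j, ∃ r : R, π r = y j := fun j => Ideal.Quotient.mk_surjective (y j)
      choose y' hy' using hy
      obtain ⟨x, hx⟩ := hsurj y'
      refine ⟨π ∘ x, ?_⟩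
      funext j
      have h1 := congrFun (hcomm x) j
      have h2 : MvPolynomial.eval x (f j) = y' j := congrFun hx j
      rw [h1, h2, hy']
    have hginj : Function.Injective g := Finite.injective_iff_surjective.mpr hgsurj
    have : g (π ∘ a) = g (π ∘ b) := by
      rw [hcomm a, hcomm b]
      funext j
      rw [show MvPolynomial.eval a (f j) = MvPolynomial.eval b (f j) from congrFun hab j]
    have h3 := congrFun (hginj this) i
    have h4 : Ideal.Quotient.mk (I ^ k) (a i) = Ideal.Quotient.mk (I ^ k) (b i) := h3
    rwa [Ideal.Quotient.mk_eq_mk_iff_sub_mem] at h4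
  have : a i - b i ∈ (⊥ : Ideal R) := by
    rw [← hint]
    exact Ideal.mem_iInf.mpr key
  exact sub_eq_zero.mp (Ideal.mem_bot.mp this)
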